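/- Let N, K be natural numbers with 1 ≤ K ≤ N and let 𝒯 = (t_1, …, t_T) be a testing design on Fin N. Then 𝒯 is feasible for (N, K) if and only if for every subset S ⊆ Fin N with |S| = K and every v ∈ S there exists an index i ∈ {1,…,T} such that the outcome of t_i on S equals some v (equivalently, v occurs in t_i and appears in t_i before every other element of S). -/

import Mathlib

/-- The outcome of a cascaded test `t` (a list of items) on a defective set `S`:
the first element of `t` belonging to `S`, or `none` if there is none. -/
def outcome {N : ℕ} (t : List (Fin N)) (S : Finset (Fin N)) : Option (Fin N) :=
  (t.filter (fun x => x ∈ S)).head?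

/-- A testing design `𝒯` (an indexed family of tests) is feasible for `(N, K)` if the
map sending each `S ⊆ Fin N` with `|S| ≤ K` to its vector of test outcomes is injective
on `{S | |S| ≤ K}`. -/
def Feasible (N K : ℕ) {T : ℕ} (𝒯 : Fin T → List (Fin N)) : Prop :=
  Set.InjOn (fun (S : Finset (Fin N)) => fun i : Fin T => outcome (𝒯 i) S)
    {S : Finset (Fin N) | S.card ≤ K}

/-- `TNK N K`: the minimum number of tests over all duplicate-free testing designs
feasible for `(N, K)`. -/
noncomputable def TNK (N K : ℕ) : ℕ :=
  sInf {T : ℕ | ∃ 𝒯 : Fin T → List (Fin N), (∀ i, (𝒯 i).Nodup) ∧ Feasible N K 𝒯}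

/-- `fT 𝒯 S v`: the number of tests in the design `𝒯` whose outcome on `S` is `some v`. -/
def fT {N T : ℕ} (𝒯 : Fin T → List (Fin N)) (S : Finset (Fin N)) (v : Fin N) : ℕ :=
  (Finset.univ.filter (fun i : Fin T => outcome (𝒯 i) S = some v)).card

/-- A design is in systematic form if every test is nonempty and the first element of
each test does not occur in any other test. -/
def Systematic {N T : ℕ} (𝒯 : Fin T → List (Fin N)) : Prop :=
  ∀ i : Fin T, 𝒯 i ≠ [] ∧ ∀ u : Fin N, (𝒯 i).head? = some u → ∀ j : Fin T, j ≠ i → u ∉ 𝒯 j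

lemma outcome_mem {N : ℕ} {t : List (Fin N)} {S : Finset (Fin N)} {v : Fin N}
    (h : outcome t S = some v) : v ∈ S := by
  unfold outcome at h
  have hv := List.mem_of_mem_head? h
  simp [List.mem_filter] at hv
  exact hv.2

lemma outcome_erase {N : ℕ} (t : List (Fin N)) (S : Finset (Fin N)) (v : Fin N)
    (h : outcome t S ≠ some v) : outcome t (S.erase v) = outcome t S := by
  induction t with
  | nil => rfl
  | cons x t ih =>
    unfold outcome at *
    by_cases hx : x ∈ S
    · have hxv : x ≠ v := by
        intro he; subst he
        simp [List.filter_cons, hx] at h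
      simp [List.filter_cons, hx, Finset.mem_erase, hxv]
    · have hx' : x ∉ S.erase v := fun hc => hx (Finset.mem_of_mem_erase hc)
      simp only [List.filter_cons, hx, hx', decide_eq_false, decide_false, if_false] at *
      exact ih h

lemma outcome_subset {N : ℕ} (t : List (Fin N)) (S S' : Finset (Fin N)) (v : Fin N)
    (hsub : S ⊆ S') (hv : v ∈ S) (h : outcome t S' = some v) : outcome t S = some v := by
  induction t with
  | nil => simp [outcome] at h
  | cons x t ih =>
    unfold outcome at *
    by_cases hx : x ∈ S'
    · simp [List.filter_cons, hx] at h
      subst h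
      simp [List.filter_cons, hv]
    · have hx' : x ∉ S := fun hc => hx (hsub hc)
      simp only [List.filter_cons, hx, hx', decide_eq_false, decide_false, if_false] at *
      exact ih h

theorem stmt0 (N K : ℕ) (hK : 1 ≤ K) (hKN : K ≤ N)
    (T : ℕ) (𝒯 : Fin T → List (Fin N)) (hnd : ∀ i, (𝒯 i).Nodup) :
    Feasible N K 𝒯 ↔
      ∀ S : Finset (Fin N), S.card = K → ∀ v ∈ S,
        ∃ i : Fin T, outcome (𝒯 i) S = some v := by
  constructor
  · intro hF S hS v hv
    by_contra h
    push_neg at h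
    have heq : (fun i => outcome (𝒯 i) (S.erase v)) = (fun i => outcome (𝒯 i) S) := by
      funext i; exact outcome_erase _ _ _ (h i)
    have h1 : (S.erase v) ∈ {S : Finset (Fin N) | S.card ≤ K} := by
      simp only [Set.mem_setOf_eq]
      calc (S.erase v).card ≤ S.card := Finset.card_erase_le
        _ ≤ K := le_of_eq hS
    have h2 : S ∈ {S : Finset (Fin N) | S.card ≤ K} := le_of_eq hS
    have heS := hF h1 h2 heq
    rw [← heS] at hv
    exact (Finset.notMem_erase v S) hv
  · intro hc S₁ h1 S₂ h2 heq
    simp only [Set.mem_setOf_eq] at h1 h2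
    have key : ∀ (A B : Finset (Fin N)), A.card ≤ K → B.card ≤ K →
        ((fun i => outcome (𝒯 i) A) = fun i => outcome (𝒯 i) B) → ∀ v ∈ A, v ∈ B := by
      intro A B hA hB hAB v hv
      obtain ⟨A', hsub, hcard⟩ := Finset.exists_superset_card_eq hA
        (by simpa using hKN)
      obtain ⟨i, hi⟩ := hc A' hcard v (hsub hv)
      have hiA : outcome (𝒯 i) A = some v := outcome_subset _ _ _ _ hsub hv hi
      have hiB : outcome (𝒯 i) B = some v := by
        have := congrFun hAB i; simpa [hiA] using this.symm
      exact outcome_mem hiB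
    exact Finset.Subset.antisymm (fun v hv => key S₁ S₂ h1 h2 heq v hv)
      (fun v hv => key S₂ S₁ h2 h1 heq.symm v hv)
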